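/- For real κ > 0 and every x ∈ ℝ \ {0}, lim_{λ→+∞} 𝐌_κ(iλx) = 0. -/

import Mathlib

open MeasureTheory Filter intervalIntegral Real Set FourierTransform in
theorem kummer_riemann_lebesgue (κ : ℝ) (hκ : 0 < κ) (M : ℂ → ℂ)
    (hM : ∀ z : ℂ, M z = (Complex.Gamma κ)⁻¹ *
      ∫ t in (0:ℝ)..1, ((1 - t : ℝ) : ℂ) ^ ((κ : ℂ) - 1) * Complex.exp (z * t)) :
    ∀ x : ℝ, x ≠ 0 →
      Filter.Tendsto (fun lam : ℝ => M (Complex.I * lam * x)) Filter.atTop (nhds 0) := by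
  intro x hx
  set f : ℝ → ℂ := Set.indicator (Set.Ioc 0 1) (fun t => ((1 - t : ℝ) : ℂ) ^ ((κ : ℂ) - 1)) with hf
  have hRL := Real.tendsto_integral_exp_smul_cocompact f
  have hw : Tendsto (fun lam : ℝ => -(lam * x) / (2 * π)) atTop (cocompact ℝ) := by
    rw [cocompact_eq_atBot_atTop]
    rcases hx.lt_or_gt with h | h
    · refine Tendsto.mono_right ?_ le_sup_right
      apply Tendsto.atTop_div_const Real.two_pi_pos
      exact tendsto_neg_atBot_atTop.comp ((tendsto_id (α := ℝ)).atTop_mul_const_of_neg h)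
    · refine Tendsto.mono_right ?_ le_sup_left
      apply Tendsto.atBot_div_const Real.two_pi_pos
      exact tendsto_neg_atTop_atBot.comp ((tendsto_id (α := ℝ)).atTop_mul_const h)
  have hcomp := hRL.comp hw
  have heq : ∀ lam : ℝ, M (Complex.I * lam * x)
      = (Complex.Gamma κ)⁻¹ * ∫ v : ℝ, 𝐞 (-(v * (-(lam * x) / (2 * π)))) • f v := by
    intro lam
    rw [hM]
    congr 1
    have : ∀ v : ℝ, 𝐞 (-(v * (-(lam * x) / (2 * π)))) • f v
        = Set.indicator (Set.Ioc 0 1)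
            (fun v => 𝐞 (-(v * (-(lam * x) / (2 * π)))) •
              ((1 - v : ℝ) : ℂ) ^ ((κ : ℂ) - 1)) v := by
      intro v
      rw [hf, Set.indicator_smul_apply]
    simp_rw [this]
    rw [MeasureTheory.integral_indicator measurableSet_Ioc,
      intervalIntegral.integral_of_le zero_le_one]
    apply setIntegral_congr_fun measurableSet_Ioc
    intro t ht
    simp only [Circle.smul_def, Real.fourierChar_apply]
    rw [mul_comm]
    congr 2
    push_cast
    have h2π : (2 * (π:ℂ)) ≠ 0 := by simp [Real.pi_ne_zero]
    field_simp
  simp_rw [heq]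
  have := hcomp.const_mul ((Complex.Gamma κ)⁻¹)
  simpa using this
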